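/- arXiv:2212.05431 — 2 statements merged into one kernel-verified Lean document; each statement's English description precedes it below -/
import Mathlib

section
/- Let Φ : ℝ → [0,∞) be a convex function and let φ_1, …, φ_n be a multiplicative system of random variables satisfying ‖φ_k‖_∞ ≤ 1. Then for any real coefficients a_1, …, a_n, E[Φ(Σ_{k=1}^n a_k φ_k)] ≤ E[Φ(Σ_{k=1}^n a_k r_k)], where r_1, …, r_n are independent Rademacher random variables. -/
open MeasureTheory ProbabilityTheory

namespace ExtremeRademacher

noncomputable def sg (b : Bool) : ℝ := if b then 1 else -1

lemma abs_sg (b : Bool) : |sg b| = 1 := by cases b <;> simp [sg]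

lemma sg_inj : Function.Injective sg := by
  intro b c h
  cases b <;> cases c <;> simp [sg] at h ⊢ <;> norm_num at h

/-- weights -/
noncomputable def w {n : ℕ} (x : Fin n → ℝ) (ε : Fin n → Bool) : ℝ :=
  ∏ k, (1 + sg (ε k) * x k) / 2

lemma w_nonneg {n : ℕ} {x : Fin n → ℝ} (hx : ∀ k, |x k| ≤ 1) (ε : Fin n → Bool) :
    0 ≤ w x ε := by
  refine Finset.prod_nonneg fun k _ => ?_
  have h := abs_le.mp (hx k)
  cases hb : (ε k) <;> simp [sg] <;> nlinarith [h.1, h.2]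

lemma sum_w {n : ℕ} (x : Fin n → ℝ) : ∑ ε : Fin n → Bool, w x ε = 1 := by
  classical
  have h := Fintype.prod_sum (f := fun (k : Fin n) (b : Bool) => (1 + sg b * x k) / 2)
  have h1 : ∀ k : Fin n, (∑ b : Bool, (1 + sg b * x k) / 2) = 1 := by
    intro k; rw [Fintype.sum_bool]; simp [sg]; ring
  calc ∑ ε : Fin n → Bool, w x ε
      = ∏ k : Fin n, ∑ b : Bool, (1 + sg b * x k) / 2 := h.symm
    _ = 1 := by rw [Finset.prod_congr rfl fun k _ => h1 k, Finset.prod_const_one]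

lemma sum_w_sg {n : ℕ} (x : Fin n → ℝ) (k : Fin n) :
    ∑ ε : Fin n → Bool, w x ε * sg (ε k) = x k := by
  classical
  set f : Fin n → Bool → ℝ := fun j b => (1 + sg b * x j) / 2 with hf
  set g : Fin n → Bool → ℝ := fun j b => if j = k then f j b * sg b else f j b with hg
  have key : ∀ ε : Fin n → Bool, w x ε * sg (ε k) = ∏ j, g j (ε j) := by
    intro ε
    have e1 : (∏ j, g j (ε j))
        = g k (ε k) * ∏ j ∈ Finset.univ.erase k, g j (ε j) :=
      (Finset.mul_prod_erase Finset.univ _ (Finset.mem_univ k)).symm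
    have e2 : (∏ j ∈ Finset.univ.erase k, g j (ε j))
        = ∏ j ∈ Finset.univ.erase k, f j (ε j) :=
      Finset.prod_congr rfl fun j hj => by
        simp only [hg, if_neg (Finset.ne_of_mem_erase hj)]
    have e3 : w x ε = f k (ε k) * ∏ j ∈ Finset.univ.erase k, f j (ε j) :=
      (Finset.mul_prod_erase Finset.univ _ (Finset.mem_univ k)).symm
    rw [e1, e2, e3]
    simp only [hg, if_pos rfl]
    ring
  rw [Finset.sum_congr rfl fun ε _ => key ε]
  have h := Fintype.prod_sum (f := g)
  have h1 : (∑ b : Bool, g k b) = x k := by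
    rw [Fintype.sum_bool]; simp only [hg, hf, if_pos rfl]; simp [sg]; ring
  have h2 : ∀ j ∈ Finset.univ.erase k, (∑ b : Bool, g j b) = 1 := by
    intro j hj
    rw [Fintype.sum_bool]
    simp only [hg, hf, if_neg (Finset.ne_of_mem_erase hj)]
    simp [sg]; ring
  calc ∑ ε : Fin n → Bool, ∏ j, g j (ε j)
      = ∏ j : Fin n, ∑ b : Bool, g j b := h.symm
    _ = (∑ b : Bool, g k b) * ∏ j ∈ Finset.univ.erase k, ∑ b : Bool, g j b :=
      (Finset.mul_prod_erase Finset.univ _ (Finset.mem_univ k)).symm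
    _ = x k := by rw [h1, Finset.prod_congr rfl h2, Finset.prod_const_one, mul_one]

lemma pointwise_bound {n : ℕ} (Φ : ℝ → ℝ) (hΦ : ConvexOn ℝ Set.univ Φ)
    (a x : Fin n → ℝ) (hx : ∀ k, |x k| ≤ 1) :
    Φ (∑ k, a k * x k) ≤
      ∑ ε : Fin n → Bool, w x ε * Φ (∑ k, a k * sg (ε k)) := by
  have h := hΦ.map_sum_le (t := Finset.univ) (w := w x)
    (p := fun ε => ∑ k, a k * sg (ε k))
    (fun ε _ => w_nonneg hx ε) (sum_w x) (fun ε _ => Set.mem_univ _)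
  have hx' : (∑ ε : Fin n → Bool, w x ε • ∑ k, a k * sg (ε k)) = ∑ k, a k * x k := by
    simp only [smul_eq_mul, Finset.mul_sum]
    rw [Finset.sum_comm]
    refine Finset.sum_congr rfl fun k _ => ?_
    rw [show (∑ ε : Fin n → Bool, w x ε * (a k * sg (ε k)))
        = a k * ∑ ε : Fin n → Bool, w x ε * sg (ε k) by
      rw [Finset.mul_sum]; exact Finset.sum_congr rfl fun ε _ => by ring]
    rw [sum_w_sg]
  rw [hx'] at h
  simpa using h

end ExtremeRademacher

namespace ExtremeRademacher

open scoped ENNReal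

variable {Ω : Type*} [MeasurableSpace Ω] {μ : Measure Ω} [IsProbabilityMeasure μ]

lemma integrable_w {n : ℕ} {φ : Fin n → Ω → ℝ} (hφmeas : ∀ k, Measurable (φ k))
    (hφbdd : ∀ k, ∀ᵐ ω ∂μ, |φ k ω| ≤ 1) (ε : Fin n → Bool) :
    Integrable (fun ω => w (fun k => φ k ω) ε) μ := by
  have hmeas : Measurable (fun ω => w (fun k => φ k ω) ε) := by
    unfold w
    exact Finset.measurable_prod _ fun k _ => (((hφmeas k).const_mul _).const_add 1).div_const 2
  refine Integrable.mono' (integrable_const 1) hmeas.aestronglyMeasurable ?_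
  filter_upwards [(ae_all_iff).mpr hφbdd] with ω hω
  rw [Real.norm_eq_abs, w, Finset.abs_prod]
  refine Finset.prod_le_one (fun k _ => abs_nonneg _) fun k _ => ?_
  have h := abs_le.mp (hω k)
  cases hb : (ε k) <;> rw [abs_le] <;> constructor <;> simp [sg] <;> nlinarith [h.1, h.2]

lemma integral_w {n : ℕ} {φ : Fin n → Ω → ℝ} (hφmeas : ∀ k, Measurable (φ k))
    (hφbdd : ∀ k, ∀ᵐ ω ∂μ, |φ k ω| ≤ 1)
    (hmult : ∀ A : Finset (Fin n), A.Nonempty → ∫ ω, ∏ j ∈ A, φ j ω ∂μ = 0)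
    (ε : Fin n → Bool) :
    ∫ ω, w (fun k => φ k ω) ε ∂μ = ((2:ℝ) ^ n)⁻¹ := by
  classical
  have hae := (ae_all_iff (ι := Fin n)).mpr hφbdd
  -- pointwise expansion
  have hpt : ∀ᵐ ω ∂μ, w (fun k => φ k ω) ε
      = ((2:ℝ)^n)⁻¹ * ∑ A ∈ (Finset.univ : Finset (Fin n)).powerset,
          ∏ k ∈ A, (sg (ε k) * φ k ω) := by
    refine ae_of_all _ fun ω => ?_
    unfold w
    rw [show (∏ k : Fin n, (1 + sg (ε k) * φ k ω) / 2)
        = (∏ k : Fin n, (sg (ε k) * φ k ω + 1)) / 2 ^ n by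
      rw [Finset.prod_div_distrib, Finset.prod_const, Finset.card_univ, Fintype.card_fin]
      congr 1
      exact Finset.prod_congr rfl fun k _ => by ring,
      Finset.prod_add]
    simp only [Finset.prod_const_one, mul_one]
    rw [div_eq_inv_mul]
  have hint : ∀ A : Finset (Fin n),
      Integrable (fun ω => ∏ k ∈ A, (sg (ε k) * φ k ω)) μ := by
    intro A
    have hmeas : Measurable (fun ω => ∏ k ∈ A, (sg (ε k) * φ k ω)) :=
      Finset.measurable_prod _ fun k _ => (hφmeas k).const_mul _
    refine Integrable.mono' (integrable_const 1) hmeas.aestronglyMeasurable ?_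
    filter_upwards [hae] with ω hω
    rw [Real.norm_eq_abs, Finset.abs_prod]
    refine Finset.prod_le_one (fun k _ => abs_nonneg _) fun k _ => ?_
    rw [abs_mul, abs_sg, one_mul]
    exact hω k
  rw [integral_congr_ae hpt, integral_const_mul, integral_finset_sum _ fun A _ => hint A]
  have hterm : ∀ A ∈ (Finset.univ : Finset (Fin n)).powerset,
      (∫ ω, ∏ k ∈ A, (sg (ε k) * φ k ω) ∂μ) = if A = ∅ then 1 else 0 := by
    intro A _
    by_cases hA : A = ∅
    · simp [hA]
    · rw [if_neg hA]
      have : (fun ω => ∏ k ∈ A, (sg (ε k) * φ k ω))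
          = fun ω => (∏ k ∈ A, sg (ε k)) * ∏ k ∈ A, φ k ω := by
        funext ω; rw [Finset.prod_mul_distrib]
      rw [this, integral_const_mul, hmult A (Finset.nonempty_of_ne_empty hA), mul_zero]
  rw [Finset.sum_congr rfl hterm, Finset.sum_ite_eq' _ ∅ (fun _ => (1:ℝ))]
  simp

end ExtremeRademacher

namespace ExtremeRademacher

open scoped ENNReal

set_option linter.unusedSectionVars false

variable {Ω' : Type*} [MeasurableSpace Ω'] {μ' : Measure Ω'} [IsProbabilityMeasure μ']

lemma rad_measure {n : ℕ} {r : Fin n → Ω' → ℝ} (hrmeas : ∀ k, Measurable (r k))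
    (hrval : ∀ k ω', r k ω' = -1 ∨ r k ω' = 1)
    (hrhalf : ∀ k, μ' {ω' | r k ω' = 1} = 1/2)
    (hrindep : iIndepFun r μ')
    (ε : Fin n → Bool) :
    μ' (⋂ k, r k ⁻¹' {sg (ε k)}) = ((2:ℝ≥0∞) ^ n)⁻¹ := by
  have hone : ∀ k, r k ⁻¹' {(1:ℝ)} = {ω' | r k ω' = 1} := fun k => rfl
  have hhalf : ∀ k, μ' (r k ⁻¹' {sg (ε k)}) = 2⁻¹ := by
    intro k
    cases hb : ε k
    · have hset : r k ⁻¹' {sg false} = {ω' | r k ω' = 1}ᶜ := by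
        ext ω'
        simp only [Set.mem_preimage, Set.mem_singleton_iff, Set.mem_compl_iff,
          Set.mem_setOf_eq, sg, if_neg (by simp : ¬(false = true))]
        constructor
        · intro h h1; rw [h1] at h; norm_num at h
        · intro h
          rcases hrval k ω' with h' | h'
          · exact h'
          · exact absurd h' h
      rw [hset, prob_compl_eq_one_sub (by rw [← hone]; exact hrmeas k (measurableSet_singleton _)),
        hrhalf k, one_div, ENNReal.one_sub_inv_two]
    · have hset : r k ⁻¹' {sg true} = {ω' | r k ω' = 1} := by
        rw [show sg true = (1:ℝ) from rfl]; exact hone k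
      rw [hset, hrhalf k, one_div]
  rw [hrindep.meas_iInter fun k => ⟨{sg (ε k)}, measurableSet_singleton _, rfl⟩]
  rw [Finset.prod_congr rfl fun k _ => hhalf k, Finset.prod_const, Finset.card_univ,
    Fintype.card_fin, ENNReal.inv_pow]

lemma rad_pointwise {n : ℕ} (Φ : ℝ → ℝ) {r : Fin n → Ω' → ℝ}
    (hrval : ∀ k ω', r k ω' = -1 ∨ r k ω' = 1) (a : Fin n → ℝ) (ω' : Ω') :
    Φ (∑ k, a k * r k ω')
      = ∑ ε : Fin n → Bool, Set.indicator (⋂ k, r k ⁻¹' {sg (ε k)})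
          (fun _ => Φ (∑ k, a k * sg (ε k))) ω' := by
  classical
  set ε₀ : Fin n → Bool := fun k => if r k ω' = 1 then true else false with hε₀
  have hsg : ∀ k, sg (ε₀ k) = r k ω' := by
    intro k
    by_cases h : r k ω' = 1
    · simp [hε₀, sg, h]
    · rcases hrval k ω' with h' | h'
      · have hf : ε₀ k = false := by simp [hε₀, h]
        rw [hf, h']; simp [sg]
      · exact absurd h' h
  have hmem : ω' ∈ ⋂ k, r k ⁻¹' {sg (ε₀ k)} :=
    Set.mem_iInter.mpr fun k => (hsg k).symm
  rw [Finset.sum_eq_single_of_mem ε₀ (Finset.mem_univ _)]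
  · rw [Set.indicator_of_mem hmem]
    congr 1
    exact Finset.sum_congr rfl fun k _ => by rw [hsg k]
  · intro ε _ hne
    refine Set.indicator_of_notMem (fun hmem' => hne ?_) _
    funext k
    have h1 : r k ω' = sg (ε k) := Set.mem_iInter.mp hmem' k
    exact sg_inj (h1.symm.trans (hsg k).symm)

lemma rad_integral {n : ℕ} (Φ : ℝ → ℝ) {r : Fin n → Ω' → ℝ}
    (hrmeas : ∀ k, Measurable (r k))
    (hrval : ∀ k ω', r k ω' = -1 ∨ r k ω' = 1)
    (hrhalf : ∀ k, μ' {ω' | r k ω' = 1} = 1/2)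
    (hrindep : iIndepFun r μ')
    (a : Fin n → ℝ) :
    ∫ ω', Φ (∑ k, a k * r k ω') ∂μ'
      = ∑ ε : Fin n → Bool, ((2:ℝ)^n)⁻¹ * Φ (∑ k, a k * sg (ε k)) := by
  have hE : ∀ ε : Fin n → Bool, MeasurableSet (⋂ k, r k ⁻¹' {sg (ε k)}) :=
    fun ε => MeasurableSet.iInter fun k => hrmeas k (measurableSet_singleton _)
  rw [integral_congr_ae (ae_of_all _ (rad_pointwise Φ hrval a)),
    integral_finset_sum _ fun ε _ => (integrable_const _).indicator (hE ε)]
  refine Finset.sum_congr rfl fun ε _ => ?_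
  rw [integral_indicator (hE ε), setIntegral_const, measureReal_def,
    rad_measure hrmeas hrval hrhalf hrindep ε]
  simp [smul_eq_mul, ENNReal.toReal_inv, ENNReal.toReal_pow, ENNReal.toReal_ofNat]

end ExtremeRademacher

open ExtremeRademacher

/-- Theorem B of \[Kar4\], extremal property of Rademacher variables. For a
convex `Φ : ℝ → [0,∞)` and a multiplicative system `φ_1, …, φ_n` with `‖φ_k‖_∞ ≤ 1`,
`E[Φ(∑ a_k φ_k)] ≤ E[Φ(∑ a_k r_k)]` for any reals `a_k`, where `r_1, …, r_n` are independent
Rademacher random variables (values `±1` with probability `1/2` each). -/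
theorem extreme_inequality_rademacher
    {Ω : Type*} [MeasurableSpace Ω] (μ : Measure Ω) [IsProbabilityMeasure μ]
    {Ω' : Type*} [MeasurableSpace Ω'] (μ' : Measure Ω') [IsProbabilityMeasure μ']
    (n : ℕ)
    (Φ : ℝ → ℝ) (hΦconv : ConvexOn ℝ Set.univ Φ) (hΦ0 : ∀ t, 0 ≤ Φ t)
    (φ : Fin n → Ω → ℝ) (hφmeas : ∀ k, Measurable (φ k))
    (hφbdd : ∀ k, ∀ᵐ ω ∂μ, |φ k ω| ≤ 1)
    (hmult : ∀ A : Finset (Fin n), A.Nonempty → ∫ ω, ∏ j ∈ A, φ j ω ∂μ = 0)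
    -- independent Rademacher random variables
    (r : Fin n → Ω' → ℝ) (hrmeas : ∀ k, Measurable (r k))
    (hrval : ∀ k ω', r k ω' = -1 ∨ r k ω' = 1)
    (hrhalf : ∀ k, μ' {ω' | r k ω' = 1} = 1/2)
    (hrindep : iIndepFun r μ')
    (a : Fin n → ℝ) :
    ∫ ω, Φ (∑ k, a k * φ k ω) ∂μ ≤ ∫ ω', Φ (∑ k, a k * r k ω') ∂μ' := by
  classical
  have hint : ∀ ε : Fin n → Bool,
      Integrable (fun ω => w (fun k => φ k ω) ε * Φ (∑ k, a k * sg (ε k))) μ :=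
    fun ε => (integrable_w hφmeas hφbdd ε).mul_const _
  have h1 : ∫ ω, Φ (∑ k, a k * φ k ω) ∂μ
      ≤ ∫ ω, (∑ ε : Fin n → Bool,
          w (fun k => φ k ω) ε * Φ (∑ k, a k * sg (ε k))) ∂μ := by
    refine integral_mono_of_nonneg (ae_of_all _ fun ω => hΦ0 _)
      (integrable_finset_sum _ fun ε _ => hint ε) ?_
    filter_upwards [(ae_all_iff).mpr hφbdd] with ω hω
    exact pointwise_bound Φ hΦconv a _ hω
  have h2 : ∫ ω, (∑ ε : Fin n → Bool,
        w (fun k => φ k ω) ε * Φ (∑ k, a k * sg (ε k))) ∂μ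
      = ∑ ε : Fin n → Bool, ((2:ℝ)^n)⁻¹ * Φ (∑ k, a k * sg (ε k)) := by
    rw [integral_finset_sum _ fun ε _ => hint ε]
    refine Finset.sum_congr rfl fun ε _ => ?_
    rw [integral_mul_const, integral_w hφmeas hφbdd hmult ε]
  rw [rad_integral Φ hrmeas hrval hrhalf hrindep a]
  exact h1.trans_eq h2
end

section
/- Let φ = (φ_1, …, φ_n) be random variables on a probability space satisfying A_k ≤ φ_k ≤ B_k almost surely, where A_k < 0 < B_k. Then for every λ > 0, P(Σ_{k=1}^n φ_k > λ) ≤ (1 + μ_n(φ)) · exp(−2λ² / Σ_{k=1}^n (B_k − A_k)²). -/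
open MeasureTheory ProbabilityTheory


open Real in

lemma hoeff_core {p : ℝ} (hp0 : 0 < p) (hp1 : p < 1) {h : ℝ} (hh : 0 ≤ h) :
    Real.log (1 - p + p * Real.exp h) ≤ p * h + h ^ 2 / 8 := by
  have hDpos : ∀ x : ℝ, 0 < 1 - p + p * Real.exp x := by
    intro x
    have := Real.exp_pos x
    nlinarith
  set F : ℝ → ℝ := fun x => p * x + x ^ 2 / 8 - Real.log (1 - p + p * Real.exp x) with hFdef
  set F' : ℝ → ℝ := fun x => p + x / 4 - p * Real.exp x / (1 - p + p * Real.exp x) with hF'def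
  have hD : ∀ x : ℝ, HasDerivAt (fun x => 1 - p + p * Real.exp x) (p * Real.exp x) x := by
    intro x
    exact ((Real.hasDerivAt_exp x).const_mul p).const_add (1 - p)
  have hF : ∀ x : ℝ, HasDerivAt F (F' x) x := by
    intro x
    have h1 : HasDerivAt (fun x : ℝ => p * x) p x := by
      simpa using (hasDerivAt_id x).const_mul p
    have h2 : HasDerivAt (fun x : ℝ => x ^ 2 / 8) (x / 4) x := by
      have := (hasDerivAt_pow 2 x).div_const 8
      exact this.congr_deriv (by norm_num; ring)
    have h3 : HasDerivAt (fun x => Real.log (1 - p + p * Real.exp x))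
        (p * Real.exp x / (1 - p + p * Real.exp x)) x := (hD x).log (hDpos x).ne'
    exact (h1.add h2).sub h3
  have hF' : ∀ x : ℝ, HasDerivAt F'
      (1 / 4 - p * (1 - p) * Real.exp x / (1 - p + p * Real.exp x) ^ 2) x := by
    intro x
    have h1 : HasDerivAt (fun x : ℝ => p + x / 4) (1 / 4) x := by
      simpa using ((hasDerivAt_id x).div_const 4).const_add p
    have h2 : HasDerivAt (fun x => p * Real.exp x / (1 - p + p * Real.exp x))
        ((p * Real.exp x * (1 - p + p * Real.exp x) - p * Real.exp x * (p * Real.exp x)) /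
          (1 - p + p * Real.exp x) ^ 2) x :=
      ((Real.hasDerivAt_exp x).const_mul p).div (hD x) (hDpos x).ne'
    have := h1.sub h2
    refine this.congr_deriv ?_
    have hne := (hDpos x).ne'
    field_simp
    ring
  have hF'nonneg : ∀ x : ℝ, 0 ≤ 1 / 4 - p * (1 - p) * Real.exp x / (1 - p + p * Real.exp x) ^ 2 := by
    intro x
    rw [sub_nonneg, div_le_iff₀ (pow_pos (hDpos x) 2)]
    nlinarith [sq_nonneg ((1 - p) - p * Real.exp x), Real.exp_pos x]
  have hmono' : Monotone F' :=
    monotone_of_deriv_nonneg (fun x => (hF' x).differentiableAt) (fun x => by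
      rw [(hF' x).deriv]; exact hF'nonneg x)
  have hF'0 : F' 0 = 0 := by
    simp [hF'def]
  have hF'pos : ∀ x ∈ Set.Ici (0:ℝ), 0 ≤ F' x := fun x hx => hF'0 ▸ hmono' hx
  have hdiffF : Differentiable ℝ F := fun x => (hF x).differentiableAt
  have hmono : MonotoneOn F (Set.Ici 0) := by
    apply monotoneOn_of_deriv_nonneg (convex_Ici 0) hdiffF.continuous.continuousOn
      (hdiffF.differentiableOn)
    intro x hx
    rw [(hF x).deriv]
    exact hF'pos x (le_of_lt (by simpa using hx))
  have h0 : F 0 = 0 := by simp [hFdef]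
  have := hmono (Set.self_mem_Ici) (Set.mem_Ici.mpr hh) hh
  rw [h0] at this
  simpa [hFdef, sub_nonneg] using this

section chordsec
open Real
lemma chord_bound (hA : A < 0) (hB : 0 < B) {x : ℝ} (hx1 : A ≤ x) (hx2 : x ≤ B) (t : ℝ) :
    Real.exp (t * x) ≤ (B * Real.exp (t * A) - A * Real.exp (t * B)) / (B - A)
      + (Real.exp (t * B) - Real.exp (t * A)) / (B - A) * x := by
  have hBA : (0:ℝ) < B - A := by linarith
  set θ : ℝ := (x - A) / (B - A) with hθ
  have hθ0 : 0 ≤ θ := div_nonneg (by linarith) hBA.le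
  have hθ1 : θ ≤ 1 := (div_le_one hBA).mpr (by linarith)
  have hconv := convexOn_exp.2 (Set.mem_univ (t * A)) (Set.mem_univ (t * B))
    (by linarith : (0:ℝ) ≤ 1 - θ) hθ0 (by ring)
  simp only [smul_eq_mul] at hconv
  have hx : (1 - θ) * (t * A) + θ * (t * B) = t * x := by
    rw [hθ]
    field_simp
    ring
  rw [hx] at hconv
  refine hconv.trans_eq ?_
  rw [hθ]
  field_simp
  ring

lemma alpha_pos (hA : A < 0) (hB : 0 < B) (t : ℝ) :
    0 < (B * Real.exp (t * A) - A * Real.exp (t * B)) / (B - A) := by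
  have hBA : (0:ℝ) < B - A := by linarith
  apply div_pos _ hBA
  nlinarith [Real.exp_pos (t * A), Real.exp_pos (t * B)]

lemma beta_nonneg (hA : A < 0) (hB : 0 < B) (ht : 0 ≤ t) :
    0 ≤ (Real.exp (t * B) - Real.exp (t * A)) / (B - A) := by
  have hBA : (0:ℝ) < B - A := by linarith
  apply div_nonneg _ hBA.le
  have : t * A ≤ t * B := by nlinarith
  simpa using Real.exp_le_exp.mpr this

lemma beta_min_le_alpha (hA : A < 0) (hB : 0 < B) (t : ℝ) :
    (Real.exp (t * B) - Real.exp (t * A)) / (B - A) * min (-A) B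
      ≤ (B * Real.exp (t * A) - A * Real.exp (t * B)) / (B - A) := by
  have hBA : (0:ℝ) < B - A := by linarith
  rw [div_mul_eq_mul_div]
  apply (div_le_div_iff_of_pos_right hBA).mpr
  have hC1 : min (-A) B ≤ -A := min_le_left _ _
  have hC2 : 0 < min (-A) B := lt_min (by linarith) hB
  have h1 : 0 < (B + min (-A) B) * Real.exp (t * A) :=
    mul_pos (by linarith) (Real.exp_pos _)
  have h2 : (A + min (-A) B) * Real.exp (t * B) ≤ 0 :=
    mul_nonpos_of_nonpos_of_nonneg (by linarith) (Real.exp_pos _).le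
  nlinarith [h1, h2]

lemma alpha_le_exp (hA : A < 0) (hB : 0 < B) (ht : 0 ≤ t) :
    (B * Real.exp (t * A) - A * Real.exp (t * B)) / (B - A)
      ≤ Real.exp (t ^ 2 * (B - A) ^ 2 / 8) := by
  have hBA : (0:ℝ) < B - A := by linarith
  set p : ℝ := -A / (B - A) with hp
  have hp0 : 0 < p := div_pos (by linarith) hBA
  have hp1 : p < 1 := (div_lt_one hBA).mpr (by linarith)
  set h : ℝ := t * (B - A) with hh
  have hh0 : 0 ≤ h := mul_nonneg ht hBA.le
  have hDpos : 0 < 1 - p + p * Real.exp h := by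
    nlinarith [Real.exp_pos h]
  have hcore := hoeff_core hp0 hp1 hh0
  have hD : 1 - p + p * Real.exp h ≤ Real.exp (p * h + h ^ 2 / 8) := by
    calc 1 - p + p * Real.exp h = Real.exp (Real.log (1 - p + p * Real.exp h)) :=
          (Real.exp_log hDpos).symm
      _ ≤ _ := Real.exp_le_exp.mpr hcore
  have key : (B * Real.exp (t * A) - A * Real.exp (t * B)) / (B - A)
      = Real.exp (t * A) * (1 - p + p * Real.exp h) := by
    have hexp : Real.exp (t * B) = Real.exp (t * A) * Real.exp h := by
      rw [← Real.exp_add]; congr 1; rw [hh]; ring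
    rw [hexp, hp]
    field_simp
    ring
  rw [key]
  calc Real.exp (t * A) * (1 - p + p * Real.exp h)
      ≤ Real.exp (t * A) * Real.exp (p * h + h ^ 2 / 8) := by
        exact mul_le_mul_of_nonneg_left hD (Real.exp_pos _).le
    _ = Real.exp (t * A + (p * h + h ^ 2 / 8)) := (Real.exp_add _ _).symm
    _ = Real.exp (t ^ 2 * (B - A) ^ 2 / 8) := by
        congr 1
        have : p * h = -(t * A) := by rw [hp, hh]; field_simp
        rw [this, hh]; ring

end chordsec

/-- Theorem C of \[Kar4\], a generalization of the Azuma–Hoeffding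
inequality. For random variables `A_k ≤ φ_k ≤ B_k` a.s. with `A_k < 0 < B_k`,
`P(∑ φ_k > λ) ≤ (1 + μ_n(φ)) exp(-2λ² / ∑ (B_k - A_k)²)` for every `λ > 0`. -/
theorem azuma_hoeffding_multiplicative
    {Ω : Type*} [MeasurableSpace Ω] (μ : Measure Ω) [IsProbabilityMeasure μ]
    (n : ℕ)
    (φ : Fin n → Ω → ℝ) (hφmeas : ∀ k, Measurable (φ k))
    (a b : Fin n → ℝ) (ha : ∀ k, a k < 0) (hb : ∀ k, 0 < b k)
    (hbound : ∀ k, ∀ᵐ ω ∂μ, a k ≤ φ k ω ∧ φ k ω ≤ b k)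
    (lam : ℝ) (hlam : 0 < lam) :
    (μ {ω | lam < ∑ k, φ k ω}).toReal ≤
      (1 + ∑ A ∈ Finset.univ.filter (fun A : Finset (Fin n) => A.Nonempty),
          (∏ j ∈ A, (min (-(a j)) (b j))⁻¹) * |∫ ω, ∏ j ∈ A, φ j ω ∂μ|) *
        Real.exp (-(2 * lam ^ 2) / ∑ k, (b k - a k) ^ 2) := by
  classical
  have hc : ∀ k, 0 < min (-(a k)) (b k) := fun k => lt_min (by linarith [ha k]) (hb k)
  set E : ℝ := ∑ A ∈ Finset.univ.filter (fun A : Finset (Fin n) => A.Nonempty),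
      (∏ j ∈ A, (min (-(a j)) (b j))⁻¹) * |∫ ω, ∏ j ∈ A, φ j ω ∂μ| with hE
  have hE0 : 0 ≤ E := by
    apply Finset.sum_nonneg
    intro T _
    exact mul_nonneg (Finset.prod_nonneg fun j _ => inv_nonneg.mpr (hc j).le) (abs_nonneg _)
  rcases Nat.eq_zero_or_pos n with hn | hn
  · subst hn
    have hset : {ω | lam < ∑ k : Fin 0, φ k ω} = ∅ := by
      ext ω; simp [hlam.not_gt, Finset.univ_eq_empty]
    rw [hset]
    simp only [measure_empty, ENNReal.toReal_zero]
    positivity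
  -- main case
  have hSpos : 0 < ∑ k, (b k - a k) ^ 2 := by
    apply Finset.sum_pos (fun k _ => by nlinarith [ha k, hb k])
    exact ⟨⟨0, hn⟩, Finset.mem_univ _⟩
  set S : ℝ := ∑ k, (b k - a k) ^ 2 with hS
  set t : ℝ := 4 * lam / S with htdef
  have ht : 0 < t := div_pos (by linarith) hSpos
  set α : Fin n → ℝ := fun k =>
    (b k * Real.exp (t * a k) - a k * Real.exp (t * b k)) / (b k - a k) with hα
  set β : Fin n → ℝ := fun k =>
    (Real.exp (t * b k) - Real.exp (t * a k)) / (b k - a k) with hβ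
  have hαpos : ∀ k, 0 < α k := fun k => alpha_pos (ha k) (hb k) t
  have hβ0 : ∀ k, 0 ≤ β k := fun k => beta_nonneg (ha k) (hb k) ht.le
  have hβα : ∀ k, β k ≤ α k * (min (-(a k)) (b k))⁻¹ := by
    intro k
    rw [← div_eq_mul_inv, le_div_iff₀ (hc k)]
    exact beta_min_le_alpha (ha k) (hb k) t
  have hαexp : ∀ k, α k ≤ Real.exp (t ^ 2 * (b k - a k) ^ 2 / 8) := fun k =>
    alpha_le_exp (ha k) (hb k) ht.le
  have hbd : ∀ᵐ ω ∂μ, ∀ k, a k ≤ φ k ω ∧ φ k ω ≤ b k := (ae_all_iff).mpr hbound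
  -- integrability of products
  have hint : ∀ T : Finset (Fin n), Integrable (fun ω => ∏ j ∈ T, φ j ω) μ := by
    intro T
    have hm : Measurable fun ω => ∏ j ∈ T, φ j ω :=
      Finset.measurable_prod _ fun j _ => hφmeas j
    refine Integrable.mono' (integrable_const (∏ j ∈ T, max (-(a j)) (b j)))
      hm.aestronglyMeasurable ?_
    filter_upwards [hbd] with ω hω
    rw [Real.norm_eq_abs, Finset.abs_prod]
    apply Finset.prod_le_prod (fun j _ => abs_nonneg _)
    intro j _
    rcases hω j with ⟨h1, h2⟩
    rw [abs_le]
    refine ⟨?_, h2.trans (le_max_right _ _)⟩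
    have := le_max_left (-(a j)) (b j); linarith
  have hintexp : Integrable (fun ω => Real.exp (t * ∑ k, φ k ω)) μ := by
    have hm : Measurable fun ω => Real.exp (t * ∑ k, φ k ω) :=
      (Real.measurable_exp.comp ((measurable_const.mul (Finset.measurable_sum _
        fun k _ => hφmeas k))))
    refine Integrable.mono' (integrable_const (Real.exp (t * ∑ k, b k)))
      hm.aestronglyMeasurable ?_
    filter_upwards [hbd] with ω hω
    rw [Real.norm_eq_abs, Real.abs_exp, Real.exp_le_exp]
    apply mul_le_mul_of_nonneg_left _ ht.le
    exact Finset.sum_le_sum fun k _ => (hω k).2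
  -- expansion of the product
  have hgeq : (fun ω => ∏ k, (α k + β k * φ k ω)) =
      fun ω => ∑ T ∈ (Finset.univ : Finset (Fin n)).powerset,
        ((∏ j ∈ T, β j) * (∏ j ∈ Finset.univ \ T, α j)) * ∏ j ∈ T, φ j ω := by
    funext ω
    calc ∏ k, (α k + β k * φ k ω) = ∏ k, (β k * φ k ω + α k) := by
          apply Finset.prod_congr rfl; intro k _; ring
      _ = ∑ T ∈ (Finset.univ : Finset (Fin n)).powerset,
            (∏ j ∈ T, β j * φ j ω) * ∏ j ∈ Finset.univ \ T, α j :=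
          Finset.prod_add _ _ _
      _ = _ := by
          apply Finset.sum_congr rfl
          intro T _
          rw [Finset.prod_mul_distrib]
          ring
  have hintg : Integrable (fun ω => ∏ k, (α k + β k * φ k ω)) μ := by
    rw [hgeq]
    exact integrable_finset_sum _ fun T _ => (hint T).const_mul _
  -- pointwise bound
  have hle : (fun ω => Real.exp (t * ∑ k, φ k ω)) ≤ᵐ[μ]
      fun ω => ∏ k, (α k + β k * φ k ω) := by
    filter_upwards [hbd] with ω hω
    calc Real.exp (t * ∑ k, φ k ω) = ∏ k, Real.exp (t * φ k ω) := by
          rw [Finset.mul_sum, Real.exp_sum]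
      _ ≤ ∏ k, (α k + β k * φ k ω) :=
          Finset.prod_le_prod (fun k _ => (Real.exp_pos _).le)
            (fun k _ => chord_bound (ha k) (hb k) (hω k).1 (hω k).2 t)
  -- integral expansion value
  have hsum : ∫ ω, ∏ k, (α k + β k * φ k ω) ∂μ =
      ∑ T ∈ (Finset.univ : Finset (Fin n)).powerset,
        ((∏ j ∈ T, β j) * (∏ j ∈ Finset.univ \ T, α j)) * ∫ ω, ∏ j ∈ T, φ j ω ∂μ := by
    rw [hgeq, integral_finset_sum _ fun T _ => (hint T).const_mul _]
    exact Finset.sum_congr rfl fun T _ => integral_const_mul _ _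
  -- bound the expansion
  have hcoef : ∀ T : Finset (Fin n),
      ((∏ j ∈ T, β j) * (∏ j ∈ Finset.univ \ T, α j)) * ∫ ω, ∏ j ∈ T, φ j ω ∂μ ≤
        (∏ k, α k) * ((∏ j ∈ T, (min (-(a j)) (b j))⁻¹) * |∫ ω, ∏ j ∈ T, φ j ω ∂μ|) := by
    intro T
    have hcoef0 : 0 ≤ (∏ j ∈ T, β j) * (∏ j ∈ Finset.univ \ T, α j) :=
      mul_nonneg (Finset.prod_nonneg fun j _ => hβ0 j)
        (Finset.prod_nonneg fun j _ => (hαpos j).le)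
    calc ((∏ j ∈ T, β j) * (∏ j ∈ Finset.univ \ T, α j)) * ∫ ω, ∏ j ∈ T, φ j ω ∂μ
        ≤ ((∏ j ∈ T, β j) * (∏ j ∈ Finset.univ \ T, α j)) * |∫ ω, ∏ j ∈ T, φ j ω ∂μ| :=
          mul_le_mul_of_nonneg_left (le_abs_self _) hcoef0
      _ ≤ ((∏ j ∈ T, α j * (min (-(a j)) (b j))⁻¹) * (∏ j ∈ Finset.univ \ T, α j)) *
            |∫ ω, ∏ j ∈ T, φ j ω ∂μ| := by
          apply mul_le_mul_of_nonneg_right _ (abs_nonneg _)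
          apply mul_le_mul_of_nonneg_right _ (Finset.prod_nonneg fun j _ => (hαpos j).le)
          exact Finset.prod_le_prod (fun j _ => hβ0 j) (fun j _ => hβα j)
      _ = (∏ k, α k) * ((∏ j ∈ T, (min (-(a j)) (b j))⁻¹) * |∫ ω, ∏ j ∈ T, φ j ω ∂μ|) := by
          rw [Finset.prod_mul_distrib]
          rw [show ((∏ j ∈ T, α j) * ∏ j ∈ T, (min (-(a j)) (b j))⁻¹) *
              (∏ j ∈ Finset.univ \ T, α j) =
              ((∏ j ∈ Finset.univ \ T, α j) * ∏ j ∈ T, α j) *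
              (∏ j ∈ T, (min (-(a j)) (b j))⁻¹) by ring]
          rw [Finset.prod_sdiff (Finset.subset_univ T)]
          ring
  have hfilter : (Finset.univ : Finset (Finset (Fin n))).filter
      (fun T => ¬ T.Nonempty) = {∅} := by
    ext T
    simp [Finset.not_nonempty_iff_eq_empty]
  have hexpansion_le : ∑ T ∈ (Finset.univ : Finset (Fin n)).powerset,
        ((∏ j ∈ T, β j) * (∏ j ∈ Finset.univ \ T, α j)) * ∫ ω, ∏ j ∈ T, φ j ω ∂μ ≤
      (∏ k, α k) * (1 + E) := by
    rw [Finset.powerset_univ]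
    rw [← Finset.sum_filter_add_sum_filter_not Finset.univ (fun T : Finset (Fin n) => T.Nonempty)]
    rw [hfilter, Finset.sum_singleton]
    have hemp : ((∏ j ∈ (∅ : Finset (Fin n)), β j) *
        (∏ j ∈ Finset.univ \ (∅ : Finset (Fin n)), α j)) *
        ∫ ω, ∏ j ∈ (∅ : Finset (Fin n)), φ j ω ∂μ = ∏ k, α k := by
      simp
    rw [hemp, mul_add, mul_one]
    have hb1 : ∑ T ∈ Finset.univ.filter (fun T : Finset (Fin n) => T.Nonempty),
        ((∏ j ∈ T, β j) * (∏ j ∈ Finset.univ \ T, α j)) * ∫ ω, ∏ j ∈ T, φ j ω ∂μ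
        ≤ (∏ k, α k) * E := by
      calc ∑ T ∈ Finset.univ.filter (fun T : Finset (Fin n) => T.Nonempty),
          ((∏ j ∈ T, β j) * (∏ j ∈ Finset.univ \ T, α j)) * ∫ ω, ∏ j ∈ T, φ j ω ∂μ
          ≤ ∑ T ∈ Finset.univ.filter (fun T : Finset (Fin n) => T.Nonempty),
            (∏ k, α k) * ((∏ j ∈ T, (min (-(a j)) (b j))⁻¹) * |∫ ω, ∏ j ∈ T, φ j ω ∂μ|) :=
            Finset.sum_le_sum fun T _ => hcoef T
        _ = (∏ k, α k) * E := by rw [hE, Finset.mul_sum]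
    linarith
  have hαprod : (∏ k, α k) ≤ Real.exp (t ^ 2 * S / 8) := by
    calc (∏ k, α k) ≤ ∏ k, Real.exp (t ^ 2 * (b k - a k) ^ 2 / 8) :=
          Finset.prod_le_prod (fun k _ => (hαpos k).le) (fun k _ => hαexp k)
      _ = Real.exp (∑ k, t ^ 2 * (b k - a k) ^ 2 / 8) := (Real.exp_sum _ _).symm
      _ = Real.exp (t ^ 2 * S / 8) := by
          congr 1
          rw [hS, Finset.mul_sum, Finset.sum_div]
  -- Chernoff chain
  have hmono : (μ {ω | lam < ∑ k, φ k ω}).toReal ≤ (μ {ω | lam ≤ ∑ k, φ k ω}).toReal := by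
    apply ENNReal.toReal_mono (measure_ne_top μ _)
    exact measure_mono (Set.setOf_subset_setOf.mpr fun ω h => le_of_lt h)
  have hchern := measure_ge_le_exp_mul_mgf (μ := μ) (X := fun ω => ∑ k, φ k ω) lam ht.le hintexp
  have hmgf : mgf (fun ω => ∑ k, φ k ω) μ t = ∫ ω, Real.exp (t * ∑ k, φ k ω) ∂μ := rfl
  have hexpeq : -t * lam + t ^ 2 * S / 8 = -(2 * lam ^ 2) / S := by
    rw [htdef]
    field_simp
    ring
  calc (μ {ω | lam < ∑ k, φ k ω}).toReal
      ≤ (μ {ω | lam ≤ ∑ k, φ k ω}).toReal := hmono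
    _ ≤ Real.exp (-t * lam) * mgf (fun ω => ∑ k, φ k ω) μ t := hchern
    _ ≤ Real.exp (-t * lam) * ((∏ k, α k) * (1 + E)) := by
        apply mul_le_mul_of_nonneg_left _ (Real.exp_pos _).le
        rw [hmgf]
        calc ∫ ω, Real.exp (t * ∑ k, φ k ω) ∂μ ≤ ∫ ω, ∏ k, (α k + β k * φ k ω) ∂μ :=
              integral_mono_ae hintexp hintg hle
          _ ≤ (∏ k, α k) * (1 + E) := hsum ▸ hexpansion_le
    _ ≤ Real.exp (-t * lam) * (Real.exp (t ^ 2 * S / 8) * (1 + E)) := by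
        apply mul_le_mul_of_nonneg_left _ (Real.exp_pos _).le
        exact mul_le_mul_of_nonneg_right hαprod (by linarith)
    _ = (1 + E) * Real.exp (-(2 * lam ^ 2) / S) := by
        rw [← hexpeq, Real.exp_add]
        ring
end
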